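/- Let α be a type, I a type of labels with a transitive well-founded order ≻, let (→_a)_{a∈I} be a family of relations on α with union →_A, and let →_B be a confluent relation on α contained in ↠_A. Assume conditions (1) and (2): (1) for all a, b ∈ I and every peak y ←_a x →_b z, either there exists w with y ↠_A w and z ↠_A w, or there exist labels a', b' with {a,b} ≻_mul {a',b'} (multiset extension of ≻) and elements u, v with u →_{a'} y, u ↔*_B v, and v →_{b'} z; (2) for every a ∈ I and every peak y ←_a x →_B z, either there exists w with y ↠_B w and z →_a w, or there exist a' with a ≻ a' and u, v with y ↠_B u, v →_{a'} u, and v ↔*_B z. Then for all labels a, b ∈ I and all natural numbers m, n: whenever y ←_a x, x →_B^m u, w →_B^n u, and w →_b z (where →_B^k denotes k-fold composition of →_B), there exist elements p, q, c such that y ↠_B p, p ↠_A c, z ↠_B q, and q ↠_A c. -/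

import Mathlib

/-- Union of a labelled family of relations. -/
def LabelledUnion {α I : Type*} (r : I → α → α → Prop) : α → α → Prop :=
  fun a b => ∃ l, r l a b

/-- Conversion: reflexive–transitive closure of the symmetric closure. -/
def Conv {α : Type*} (r : α → α → Prop) : α → α → Prop :=
  Relation.ReflTransGen (fun a b => r a b ∨ r b a)

/-- `k`-fold relational composition. -/
def RelPow {α : Type*} (r : α → α → Prop) : ℕ → α → α → Prop
  | 0 => Eq
  | n + 1 => fun a c => ∃ b, r a b ∧ RelPow r n b c

/-- Dershowitz–Manna multiset extension: `DMLT lt N M` means `M ≻_mul N`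
where `lt y x` means `x ≻ y`. -/
def DMLT {I : Type*} (lt : I → I → Prop) (N M : Multiset I) : Prop :=
  ∃ X Y Z : Multiset I, X ≠ 0 ∧ M = Z + X ∧ N = Z + Y ∧ ∀ y ∈ Y, ∃ x ∈ X, lt y x

/-! ### Well-foundedness of the Dershowitz–Manna order -/

/-- One-step multiset order: replace one element by a multiset of smaller ones. -/
def DMStep {I : Type*} (lt : I → I → Prop) (N M : Multiset I) : Prop :=
  ∃ a Z Y, M = a ::ₘ Z ∧ N = Z + Y ∧ ∀ y ∈ Y, lt y a

theorem dmstep_acc_add {I : Type*} {lt : I → I → Prop} {a : I}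
    (ih1 : ∀ b, lt b a → ∀ M, Acc (DMStep lt) M → Acc (DMStep lt) (b ::ₘ M))
    (M : Multiset I) (hM : Acc (DMStep lt) M) :
    ∀ Y : Multiset I, (∀ y ∈ Y, lt y a) → Acc (DMStep lt) (M + Y) := by
  intro Y
  induction Y using Multiset.induction_on with
  | empty => intro _; simpa using hM
  | cons y Y ih =>
    intro hY
    rw [Multiset.add_cons]
    exact ih1 y (hY y (Multiset.mem_cons_self _ _)) _
      (ih fun z hz => hY z (Multiset.mem_cons_of_mem hz))

theorem dmstep_acc_cons {I : Type*} {lt : I → I → Prop} (a : I) (ha : Acc lt a) :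
    ∀ M, Acc (DMStep lt) M → Acc (DMStep lt) (a ::ₘ M) := by
  induction ha with
  | intro a _ ih1 =>
    intro M hM
    induction hM with
    | intro M hMacc ih2 =>
      constructor
      intro N hN
      obtain ⟨c, Z, Y, hMZ, hNZ, hY⟩ := hN
      rcases Multiset.cons_eq_cons.mp hMZ with ⟨rfl, rfl⟩ | ⟨_, W, hMW, hZW⟩
      · subst hNZ
        exact dmstep_acc_add ih1 _ ⟨_, hMacc⟩ Y hY
      · subst hNZ hZW
        rw [Multiset.cons_add]
        exact ih2 (W + Y) ⟨c, W, Y, hMW, rfl, hY⟩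

theorem dmstep_wf {I : Type*} {lt : I → I → Prop} (hwf : WellFounded lt) :
    WellFounded (DMStep lt) := by
  constructor
  intro M
  induction M using Multiset.induction_on with
  | empty =>
    constructor
    rintro N ⟨c, Z, Y, h, -, -⟩
    exact absurd h.symm (Multiset.cons_ne_zero)
  | cons a M ih => exact dmstep_acc_cons a (hwf.apply a) M ih

theorem dmlt_sub_trans {I : Type*} (lt : I → I → Prop) :
    ∀ X Z Y N M : Multiset I, X ≠ 0 → M = Z + X → N = Z + Y →
      (∀ y ∈ Y, ∃ x ∈ X, lt y x) → Relation.TransGen (DMStep lt) N M := by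
  intro X
  induction X using Multiset.induction_on with
  | empty => intro Z Y N M h; exact absurd rfl h
  | cons x X ih =>
    intro Z Y N M _ hM hN hY
    classical
    by_cases hX : X = 0
    · subst hX hM hN
      apply Relation.TransGen.single
      refine ⟨x, Z, Y, by rw [Multiset.add_cons, add_zero], rfl, ?_⟩
      intro y hy
      obtain ⟨x', hx', h⟩ := hY y hy
      simp only [Multiset.mem_cons, Multiset.notMem_zero, or_false] at hx'
      rwa [← hx']
    · set Y1 := Y.filter (fun y => lt y x) with hY1
      set Y2 := Y.filter (fun y => ¬ lt y x) with hY2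
      have step : DMStep lt (Z + Y1 + X) M := by
        refine ⟨x, Z + X, Y1, by rw [hM, Multiset.add_cons], ?_, ?_⟩
        · rw [add_assoc, add_assoc, add_comm Y1 X]
        · intro y hy
          exact (Multiset.mem_filter.mp hy).2
      have hNsplit : N = (Z + Y1) + Y2 := by
        rw [hN, add_assoc, Multiset.filter_add_not]
      have htail : Relation.TransGen (DMStep lt) N (Z + Y1 + X) := by
        refine ih (Z + Y1) Y2 N (Z + Y1 + X) hX rfl hNsplit ?_
        intro y hy
        have hy2 := Multiset.mem_filter.mp hy
        obtain ⟨x', hx', h⟩ := hY y hy2.1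
        rcases Multiset.mem_cons.mp hx' with rfl | hx'
        · exact absurd h hy2.2
        · exact ⟨x', hx', h⟩
      exact htail.tail step

theorem dmlt_wf {I : Type*} {lt : I → I → Prop} (hwf : WellFounded lt) :
    WellFounded (DMLT lt) := by
  refine Subrelation.wf ?_ (dmstep_wf hwf).transGen
  rintro N M ⟨X, Y, Z, hX, hM, hN, hY⟩
  exact dmlt_sub_trans lt X Z Y N M hX hM hN hY

theorem dmlt_left {I : Type*} {lt : I → I → Prop} {a a' b : I} (h : lt a' a) :
    DMLT lt {a', b} {a, b} := by
  refine ⟨{a}, {a'}, {b}, by simp, ?_, ?_, ?_⟩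
  · rw [Multiset.singleton_add, ← Multiset.cons_zero b,
      ← Multiset.cons_zero a, Multiset.cons_swap]
    rfl
  · rw [Multiset.singleton_add, ← Multiset.cons_zero b,
      ← Multiset.cons_zero a', Multiset.cons_swap]
    rfl
  · intro y hy
    simp only [Multiset.mem_singleton] at hy
    exact ⟨a, Multiset.mem_singleton_self a, hy ▸ h⟩

theorem dmlt_right {I : Type*} {lt : I → I → Prop} {a b b' : I} (h : lt b' b) :
    DMLT lt {a, b'} {a, b} := by
  refine ⟨{b}, {b'}, {a}, by simp, by rw [Multiset.singleton_add]; rfl,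
    by rw [Multiset.singleton_add]; rfl, ?_⟩
  intro y hy
  simp only [Multiset.mem_singleton] at hy
  exact ⟨b, Multiset.mem_singleton_self b, hy ▸ h⟩

/-! ### Basic facts about `RelPow` and `Conv` -/

theorem relpow_to_rtg {α : Type*} {r : α → α → Prop} :
    ∀ {m x y}, RelPow r m x y → Relation.ReflTransGen r x y := by
  intro m
  induction m with
  | zero => intro x y h; exact h ▸ Relation.ReflTransGen.refl
  | succ m ih =>
    rintro x y ⟨b, hb, hby⟩
    exact Relation.ReflTransGen.head hb (ih hby)

theorem relpow_tail {α : Type*} {r : α → α → Prop} :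
    ∀ {m x y z}, RelPow r m x y → r y z → RelPow r (m + 1) x z := by
  intro m
  induction m with
  | zero => intro x y z h hyz; exact ⟨z, h ▸ hyz, rfl⟩
  | succ m ih =>
    rintro x y z ⟨b, hb, hby⟩ hyz
    exact ⟨b, hb, ih hby hyz⟩

theorem rtg_to_relpow {α : Type*} {r : α → α → Prop} {x y : α}
    (h : Relation.ReflTransGen r x y) : ∃ m, RelPow r m x y := by
  induction h with
  | refl => exact ⟨0, rfl⟩
  | tail _ hbc ih =>
    obtain ⟨m, hm⟩ := ih
    exact ⟨m + 1, relpow_tail hm hbc⟩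

theorem conv_of_rtg {α : Type*} {r : α → α → Prop} {x y : α}
    (h : Relation.ReflTransGen r x y) : Conv r x y :=
  Relation.ReflTransGen.mono (fun _ _ hab => Or.inl hab) _ _ h

theorem conv_symm {α : Type*} {r : α → α → Prop} {x y : α}
    (h : Conv r x y) : Conv r y x := by
  induction h with
  | refl => exact Relation.ReflTransGen.refl
  | tail _ hbc ih => exact Relation.ReflTransGen.head (Or.symm hbc) ih

theorem conv_join {α : Type*} {r : α → α → Prop}
    (hconf : ∀ a b c, Relation.ReflTransGen r a b → Relation.ReflTransGen r a c →
      ∃ d, Relation.ReflTransGen r b d ∧ Relation.ReflTransGen r c d)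
    {x y : α} (h : Conv r x y) :
    ∃ t, Relation.ReflTransGen r x t ∧ Relation.ReflTransGen r y t := by
  induction h with
  | refl => exact ⟨x, Relation.ReflTransGen.refl, Relation.ReflTransGen.refl⟩
  | @tail b c _ hbc ih =>
    obtain ⟨t, hxt, hbt⟩ := ih
    rcases hbc with hbc | hcb
    · obtain ⟨d, htd, hcd⟩ := hconf b t c hbt (Relation.ReflTransGen.single hbc)
      exact ⟨d, hxt.trans htd, hcd⟩
    · exact ⟨t, hxt, (Relation.ReflTransGen.single hcb).trans hbt⟩

theorem rtg_lift {α : Type*} {r s : α → α → Prop}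
    (hsub : ∀ a b, r a b → Relation.ReflTransGen s a b) {x y : α}
    (h : Relation.ReflTransGen r x y) : Relation.ReflTransGen s x y := by
  induction h with
  | refl => exact Relation.ReflTransGen.refl
  | tail _ hbc ih => exact ih.trans (hsub _ _ hbc)

/-- The claim in the proof of the abstract confluence criterion. -/
theorem stmt_5 {α I : Type*} (lt : I → I → Prop)
    (htrans : Transitive lt) (hwf : WellFounded lt)
    (ra : I → α → α → Prop) (rb : α → α → Prop)
    (hsub : ∀ a b, rb a b → Relation.ReflTransGen (LabelledUnion ra) a b)
    (hbconf : ∀ a b c, Relation.ReflTransGen rb a b → Relation.ReflTransGen rb a c →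
      ∃ d, Relation.ReflTransGen rb b d ∧ Relation.ReflTransGen rb c d)
    (h1 : ∀ (a b : I) (x y z : α), ra a x y → ra b x z →
        (∃ w, Relation.ReflTransGen (LabelledUnion ra) y w ∧
              Relation.ReflTransGen (LabelledUnion ra) z w) ∨
        (∃ (a' b' : I) (u v : α), DMLT lt {a', b'} {a, b} ∧
              ra a' u y ∧ Conv rb u v ∧ ra b' v z))
    (h2 : ∀ (a : I) (x y z : α), ra a x y → rb x z →
        (∃ w, Relation.ReflTransGen rb y w ∧ ra a z w) ∨
        (∃ (a' : I) (u v : α), lt a' a ∧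
              Relation.ReflTransGen rb y u ∧ ra a' v u ∧ Conv rb v z)) :
    ∀ (a b : I) (m n : ℕ) (x y u w z : α),
      ra a x y → RelPow rb m x u → RelPow rb n w u → ra b w z →
      ∃ p q c, Relation.ReflTransGen rb y p ∧
               Relation.ReflTransGen (LabelledUnion ra) p c ∧
               Relation.ReflTransGen rb z q ∧
               Relation.ReflTransGen (LabelledUnion ra) q c := by
  have key : ∀ P : Multiset I × ℕ, ∀ (a b : I) (m n : ℕ) (x y u w z : α),
      ({a, b} : Multiset I) = P.1 → m + n = P.2 →
      ra a x y → RelPow rb m x u → RelPow rb n w u → ra b w z →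
      ∃ p q c, Relation.ReflTransGen rb y p ∧
               Relation.ReflTransGen (LabelledUnion ra) p c ∧
               Relation.ReflTransGen rb z q ∧
               Relation.ReflTransGen (LabelledUnion ra) q c := by
    intro P
    induction P using ((dmlt_wf hwf).prod_lex (wellFounded_lt (α := ℕ) )).induction with
    | _ P IH =>
    obtain ⟨M, k⟩ := P
    intro a b m n x y u w z hM hk hxy hxu hwu hwz
    subst hM hk
    match m, hxu with
    | 0, hxu =>
      obtain rfl : x = u := hxu
      match n, hwu with
      | 0, hwu =>
        obtain rfl : w = x := hwu
        rcases h1 a b _ y z hxy hwz with ⟨c, hyc, hzc⟩ |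
          ⟨a', b', u', v, hdm, hu'y, hconv, hvz⟩
        · exact ⟨y, z, c, Relation.ReflTransGen.refl, hyc, Relation.ReflTransGen.refl, hzc⟩
        · obtain ⟨t, hu't, hvt⟩ := conv_join hbconf hconv
          obtain ⟨m', hm'⟩ := rtg_to_relpow hu't
          obtain ⟨n', hn'⟩ := rtg_to_relpow hvt
          exact IH ({a', b'}, m' + n') (Prod.Lex.left _ _ hdm)
            a' b' m' n' u' y t v z rfl rfl hu'y hm' hn' hvz
      | n' + 1, hwu =>
        obtain ⟨w1, hww1, hw1u⟩ := hwu
        rcases h2 b w z w1 hwz hww1 with ⟨w', hzw', hw1w'⟩ |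
          ⟨b', u', v, hb'b, hzu', hvu', hconv⟩
        · obtain ⟨p, q, c, hyp, hpc, hw'q, hqc⟩ :=
            IH ({a, b}, 0 + n') (Prod.Lex.right _ (by omega))
              a b 0 n' x y x w1 w' rfl rfl hxy rfl hw1u hw1w'
          exact ⟨p, q, c, hyp, hpc, hzw'.trans hw'q, hqc⟩
        · have hconv2 : Conv rb v x :=
            hconv.trans (conv_of_rtg (relpow_to_rtg hw1u))
          obtain ⟨t, hvt, hut⟩ := conv_join hbconf hconv2
          obtain ⟨m1, hm1⟩ := rtg_to_relpow hut
          obtain ⟨n1, hn1⟩ := rtg_to_relpow hvt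
          obtain ⟨p, q, c, hyp, hpc, hu'q, hqc⟩ :=
            IH ({a, b'}, m1 + n1) (Prod.Lex.left _ _ (dmlt_right hb'b))
              a b' m1 n1 x y t v u' rfl rfl hxy hm1 hn1 hvu'
          exact ⟨p, q, c, hyp, hpc, hzu'.trans hu'q, hqc⟩
    | m' + 1, hxu =>
      obtain ⟨x1, hxx1, hx1u⟩ := hxu
      rcases h2 a x y x1 hxy hxx1 with ⟨y', hyy', hx1y'⟩ |
        ⟨a', u', v, ha'a, hyu', hvu', hconv⟩
      · obtain ⟨p, q, c, hy'p, hpc, hzq, hqc⟩ :=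
          IH ({a, b}, m' + n) (Prod.Lex.right _ (by omega))
            a b m' n x1 y' u w z rfl rfl hx1y' hx1u hwu hwz
        exact ⟨p, q, c, hyy'.trans hy'p, hpc, hzq, hqc⟩
      · have hconv2 : Conv rb v w :=
          (hconv.trans (conv_of_rtg (relpow_to_rtg hx1u))).trans
            (conv_symm (conv_of_rtg (relpow_to_rtg hwu)))
        obtain ⟨t, hvt, hwt⟩ := conv_join hbconf hconv2
        obtain ⟨m1, hm1⟩ := rtg_to_relpow hvt
        obtain ⟨n1, hn1⟩ := rtg_to_relpow hwt
        obtain ⟨p, q, c, hu'p, hpc, hzq, hqc⟩ :=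
          IH ({a', b}, m1 + n1) (Prod.Lex.left _ _ (dmlt_left ha'a))
            a' b m1 n1 v u' t w z rfl rfl hvu' hm1 hn1 hwz
        exact ⟨p, q, c, hyu'.trans hu'p, hpc, hzq, hqc⟩
  intro a b m n x y u w z hxy hxu hwu hwz
  exact key ({a, b}, m + n) a b m n x y u w z rfl rfl hxy hxu hwu hwz
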